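/- Let 0 < α_min ≤ α_max < 2. There exist constants c_1, c_2, c_3 > 0 depending only on α_min and α_max such that for every α ∈ [α_min, α_max]: (i) c_1 |n|^{−α−1} ≤ |a_n^{(α)}| ≤ c_2 |n|^{−α−1} for every integer n ≠ 0; and (ii) Σ_{n ≥ N} |a_n^{(α)}| ≥ c_3 N^{−α} for every integer N ≥ 1. -/

import Mathlib

open MeasureTheory Real

noncomputable section

/-- The finite difference weight `a_n^{(α)} = (1/(2π)) ∫_{-π}^{π} e^{-inη} (4 sin²(η/2))^{α/2} dη`. -/
def aWeightC (α : ℝ) (n : ℤ) : ℂ :=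
  (1 / (2 * Real.pi)) • ∫ η in (-Real.pi)..Real.pi,
    Complex.exp (-Complex.I * (n : ℂ) * (η : ℂ)) *
      (((4 * Real.sin (η / 2) ^ 2) ^ (α / 2) : ℝ) : ℂ)


lemma exp_ne_one_aux {η : ℝ} (h1 : η ≠ 0) (h2 : |η| < 2 * Real.pi) :
    Complex.exp (Complex.I * η) ≠ 1 := by
  intro h
  rw [Complex.exp_eq_one_iff] at h
  obtain ⟨k, hk⟩ := h
  have : (η : ℂ) = ((k * (2 * Real.pi) : ℝ) : ℂ) := by
    have hI : Complex.I ≠ 0 := Complex.I_ne_zero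
    have : Complex.I * η = Complex.I * (k * (2 * Real.pi)) := by rw [hk]; push_cast; ring
    have := mul_left_cancel₀ hI this
    rw [this]; push_cast; ring
  have hη : η = k * (2 * Real.pi) := by exact_mod_cast this
  rcases eq_or_ne k 0 with rfl | hk0
  · simp at hη; exact h1 hη
  · have h1k : (1 : ℝ) ≤ |(k : ℝ)| := by exact_mod_cast Int.one_le_abs hk0
    have hπ : 0 < Real.pi := Real.pi_pos
    rw [hη, abs_mul, abs_of_pos (by positivity : (0:ℝ) < 2 * Real.pi)] at h2
    nlinarith


lemma re_U_pos {η : ℝ} (hη : Complex.exp (Complex.I * η) ≠ 1) :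
    0 < (1 - Complex.exp (Complex.I * η)).re := by
  have hre : (Complex.exp (Complex.I * η)).re = Real.cos η := by
    rw [mul_comm]; exact Complex.exp_ofReal_mul_I_re η
  have hcos : Real.cos η < 1 := by
    rcases lt_or_eq_of_le (Real.cos_le_one η) with h | h
    · exact h
    · exfalso
      apply hη
      have hsin : Real.sin η = 0 := by
        have := Real.sin_sq_add_cos_sq η
        nlinarith
      rw [mul_comm, Complex.exp_mul_I, ← Complex.ofReal_cos, ← Complex.ofReal_sin, h, hsin]
      simp
  simp [Complex.sub_re, hre]; linarith

lemma U_ne_zero {η : ℝ} (hη : Complex.exp (Complex.I * η) ≠ 1) :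
    1 - Complex.exp (Complex.I * η) ≠ 0 := by
  intro h
  apply hη
  have := sub_eq_zero.mp h
  exact this.symm

lemma V_eq_conj (η : ℝ) :
    1 - Complex.exp (-Complex.I * η) = (starRingEnd ℂ) (1 - Complex.exp (Complex.I * η)) := by
  rw [map_sub, ← Complex.exp_conj]
  simp [Complex.conj_I]

lemma arg_ne_pi {η : ℝ} (hη : Complex.exp (Complex.I * η) ≠ 1) :
    (1 - Complex.exp (Complex.I * η)).arg ≠ Real.pi := by
  intro h
  rw [Complex.arg_eq_pi_iff] at h
  exact absurd (re_U_pos hη) (by linarith [h.1])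

lemma normSq_U (η : ℝ) :
    Complex.normSq (1 - Complex.exp (Complex.I * η)) = 4 * Real.sin (η / 2) ^ 2 := by
  have h1 : (Complex.exp (Complex.I * η)).re = Real.cos η := by
    rw [mul_comm]; exact Complex.exp_ofReal_mul_I_re η
  have h2 : (Complex.exp (Complex.I * η)).im = Real.sin η := by
    rw [mul_comm]; exact Complex.exp_ofReal_mul_I_im η
  rw [Complex.normSq_apply]
  simp only [Complex.sub_re, Complex.sub_im, Complex.one_re, Complex.one_im, h1, h2]
  have h3 : Real.sin (η/2) ^ 2 = 1/2 - Real.cos (2 * (η/2)) / 2 := Real.sin_sq_eq_half_sub _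
  rw [show 2 * (η/2) = η by ring] at h3
  have := Real.sin_sq_add_cos_sq η
  nlinarith

lemma UV_eq (α : ℝ) {η : ℝ} (hη : Complex.exp (Complex.I * η) ≠ 1) :
    (1 - Complex.exp (Complex.I * η)) ^ ((α/2 : ℝ) : ℂ) *
      (1 - Complex.exp (-Complex.I * η)) ^ ((α/2 : ℝ) : ℂ) =
      (((4 * Real.sin (η / 2) ^ 2) ^ (α / 2) : ℝ) : ℂ) := by
  set U := 1 - Complex.exp (Complex.I * η) with hU
  have hxpos : 0 < ‖U‖ := norm_pos_iff.mpr (U_ne_zero hη)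
  rw [V_eq_conj η, Complex.conj_cpow U _ (arg_ne_pi hη),
    show (starRingEnd ℂ) ((α/2 : ℝ) : ℂ) = ((α/2 : ℝ) : ℂ) from Complex.conj_ofReal _,
    Complex.mul_conj]
  congr 1
  rw [← Complex.sq_norm, Complex.norm_cpow_real]
  have e1 : (‖U‖ ^ (α/2)) ^ (2:ℕ) = ‖U‖ ^ α := by
    rw [← Real.rpow_natCast (‖U‖ ^ (α/2)) 2, ← Real.rpow_mul hxpos.le]
    norm_num
  have e2 : (4 * Real.sin (η/2) ^ 2) ^ (α/2) = ‖U‖ ^ α := by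
    rw [← normSq_U, ← Complex.sq_norm, ← Real.rpow_natCast (‖U‖) 2,
      ← Real.rpow_mul hxpos.le]
    norm_num
    congr 1
    ring
  rw [e1, e2]


section
variable (α : ℝ) (n : ℤ)

/-- the auxiliary function H -/
def Haux (η : ℝ) : ℂ :=
  Complex.exp (-Complex.I * (n : ℂ) * (η : ℂ)) *
    ((1 - Complex.exp (Complex.I * η)) ^ (((α/2 : ℝ) : ℂ) + 1) *
      (1 - Complex.exp (-Complex.I * η)) ^ ((α/2 : ℝ) : ℂ))

/-- the derivative formula -/
def Hderiv (η : ℝ) : ℂ :=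
  -Complex.I * Complex.exp (-Complex.I * (n : ℂ) * (η : ℂ)) *
    (((n : ℂ) + ((α/2 : ℝ) : ℂ)) + ((((α/2 : ℝ) : ℂ) + 1) - (n : ℂ)) * Complex.exp (Complex.I * η)) *
    (((4 * Real.sin (η / 2) ^ 2) ^ (α / 2) : ℝ) : ℂ)

end

lemma hasDerivAt_Haux (α : ℝ) (n : ℤ) {η : ℝ} (hη : Complex.exp (Complex.I * η) ≠ 1) :
    HasDerivAt (Haux α n) (Hderiv α n η) η := by
  set c : ℂ := ((α/2 : ℝ) : ℂ) with hc
  have hid : HasDerivAt (fun t : ℝ => (t : ℂ)) 1 η := Complex.ofRealCLM.hasDerivAt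
  have hE : HasDerivAt (fun t : ℝ => Complex.exp (-Complex.I * (n : ℂ) * (t : ℂ)))
      (Complex.exp (-Complex.I * (n : ℂ) * (η : ℂ)) * (-Complex.I * (n : ℂ))) η := by
    have h1 : HasDerivAt (fun t : ℝ => -Complex.I * (n : ℂ) * (t : ℂ)) (-Complex.I * (n : ℂ)) η := by
      simpa using hid.const_mul (-Complex.I * (n : ℂ))
    exact h1.cexp
  have hX : HasDerivAt (fun t : ℝ => Complex.exp (Complex.I * (t : ℂ)))
      (Complex.exp (Complex.I * (η : ℂ)) * Complex.I) η := by
    have h1 : HasDerivAt (fun t : ℝ => Complex.I * (t : ℂ)) Complex.I η := by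
      simpa using hid.const_mul Complex.I
    exact h1.cexp
  have hY : HasDerivAt (fun t : ℝ => Complex.exp (-Complex.I * (t : ℂ)))
      (Complex.exp (-Complex.I * (η : ℂ)) * -Complex.I) η := by
    have h1 : HasDerivAt (fun t : ℝ => -Complex.I * (t : ℂ)) (-Complex.I) η := by
      simpa using hid.const_mul (-Complex.I)
    exact h1.cexp
  have hU : HasDerivAt (fun t : ℝ => 1 - Complex.exp (Complex.I * (t : ℂ)))
      (-(Complex.exp (Complex.I * (η : ℂ)) * Complex.I)) η := (hX.const_sub 1)
  have hV : HasDerivAt (fun t : ℝ => 1 - Complex.exp (-Complex.I * (t : ℂ)))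
      (-(Complex.exp (-Complex.I * (η : ℂ)) * -Complex.I)) η := (hY.const_sub 1)
  have hUslit : (1 - Complex.exp (Complex.I * (η : ℂ))) ∈ Complex.slitPlane := by
    rw [Complex.mem_slitPlane_iff]
    exact Or.inl (re_U_pos hη)
  have hVslit : (1 - Complex.exp (-Complex.I * (η : ℂ))) ∈ Complex.slitPlane := by
    rw [Complex.mem_slitPlane_iff]
    left
    rw [V_eq_conj η]
    simpa using re_U_pos hη
  have hUp : HasDerivAt (fun t : ℝ => (1 - Complex.exp (Complex.I * (t : ℂ))) ^ (c + 1))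
      ((c+1) * (1 - Complex.exp (Complex.I * (η : ℂ))) ^ c *
        (-(Complex.exp (Complex.I * (η : ℂ)) * Complex.I))) η := by
    have := (Complex.hasStrictDerivAt_cpow_const (c := c+1) hUslit).hasDerivAt.comp η hU
    simpa [Function.comp_def, mul_comm, mul_assoc, mul_left_comm] using this
  have hVp : HasDerivAt (fun t : ℝ => (1 - Complex.exp (-Complex.I * (t : ℂ))) ^ c)
      (c * (1 - Complex.exp (-Complex.I * (η : ℂ))) ^ (c - 1) *
        (-(Complex.exp (-Complex.I * (η : ℂ)) * -Complex.I))) η := by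
    have := (Complex.hasStrictDerivAt_cpow_const (c := c) hVslit).hasDerivAt.comp η hV
    simpa [Function.comp_def, mul_comm, mul_assoc, mul_left_comm] using this
  have hprod := hE.fun_mul (hUp.fun_mul hVp)
  refine hprod.congr_deriv ?_
  symm
  simp only [Hderiv]
  set X := Complex.exp (Complex.I * (η : ℂ)) with hXdef
  set Y := Complex.exp (-Complex.I * (η : ℂ)) with hYdef
  set E := Complex.exp (-Complex.I * (n : ℂ) * (η : ℂ)) with hEdef
  have hXY : X * Y = 1 := by
    rw [hXdef, hYdef, ← Complex.exp_add]
    norm_num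
  have hU0 : (1 - X) ≠ 0 := U_ne_zero hη
  have hV0 : (1 - Y) ≠ 0 := by
    intro h
    have hY1 : Y = 1 := by linear_combination -h
    rw [hY1, mul_one] at hXY
    exact hU0 (by rw [hXY]; ring)
  have e1 : (1 - X) ^ (c + 1) = (1 - X) ^ c * (1 - X) := by
    rw [Complex.cpow_add _ _ hU0, Complex.cpow_one]
  have e2 : (1 - Y) ^ (c - 1) = (1 - Y) ^ c / (1 - Y) := by
    rw [Complex.cpow_sub _ _ hV0, Complex.cpow_one]
  have e3 : (1 - X) ^ c * (1 - Y) ^ c = (((4 * Real.sin (η / 2) ^ 2) ^ (α / 2) : ℝ) : ℂ) :=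
    UV_eq α hη
  rw [e1, e2, ← e3]
  set A := (1 - X) ^ c with hA
  set B := (1 - Y) ^ c with hB
  have hinv : (1 - Y) * (1 - Y)⁻¹ = 1 := mul_inv_cancel₀ hV0
  linear_combination (Complex.I * E * A * B * c / (1 - Y)) * hXY +
    (Complex.I * E * A * B * c) * hinv


section
variable (α : ℝ) (n : ℤ)
/-- integrand of the weight -/
def Fint (η : ℝ) : ℂ :=
  Complex.exp (-Complex.I * (n : ℂ) * (η : ℂ)) *
    (((4 * Real.sin (η / 2) ^ 2) ^ (α / 2) : ℝ) : ℂ)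
def IW : ℂ := ∫ η in (-Real.pi)..Real.pi, Fint α n η
end

lemma cont_g {α : ℝ} (hα : 0 < α) :
    Continuous (fun η : ℝ => (4 * Real.sin (η/2)^2) ^ (α/2)) := by
  apply Continuous.rpow_const (by continuity)
  intro x
  right
  positivity

lemma cont_Fint {α : ℝ} (hα : 0 < α) (n : ℤ) : Continuous (Fint α n) := by
  apply Continuous.mul
  · apply Continuous.cexp
    continuity
  · exact Complex.continuous_ofReal.comp (cont_g hα)

lemma cont_Hderiv {α : ℝ} (hα : 0 < α) (n : ℤ) : Continuous (Hderiv α n) := by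
  unfold Hderiv
  apply Continuous.mul
  · apply Continuous.mul
    · apply Continuous.mul continuous_const
      apply Continuous.cexp
      continuity
    · apply Continuous.add continuous_const
      apply Continuous.mul continuous_const
      apply Continuous.cexp
      continuity
  · exact Complex.continuous_ofReal.comp (cont_g hα)

lemma abs_E_eq_one (n : ℤ) (t : ℝ) :
    ‖Complex.exp (-Complex.I * (n : ℂ) * (t : ℂ))‖ = 1 := by
  rw [Complex.norm_exp]
  have : (-Complex.I * (n : ℂ) * (t : ℂ)).re = 0 := by simp
  rw [this, Real.exp_zero]

lemma norm_Haux_le {α : ℝ} (hα0 : 0 < α) (hα2 : α < 2) (n : ℤ) (t : ℝ) :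
    ‖Haux α n t‖ ≤ 4 * ‖1 - Complex.exp (Complex.I * t)‖ := by
  unfold Haux
  rw [norm_mul, norm_mul, abs_E_eq_one, one_mul]
  set x := ‖1 - Complex.exp (Complex.I * t)‖ with hx
  have hx0 : 0 ≤ x := norm_nonneg _
  have hx2 : x ≤ 2 := by
    calc x ≤ ‖(1:ℂ)‖ + ‖Complex.exp (Complex.I * t)‖ := by
              exact (norm_sub_le _ _)
    _ = 2 := by
          rw [Complex.norm_exp, norm_one]
          have : (Complex.I * (t : ℂ)).re = 0 := by simp
          rw [this, Real.exp_zero]; norm_num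
  have hy2 : ‖1 - Complex.exp (-Complex.I * t)‖ ≤ 2 := by
    rw [V_eq_conj t, Complex.norm_conj]; exact hx2
  have h1 : ‖(1 - Complex.exp (Complex.I * t)) ^ (((α/2 : ℝ) : ℂ) + 1)‖
      = x ^ (α/2 + 1) := by
    rw [show (((α/2 : ℝ) : ℂ) + 1) = (((α/2 + 1 : ℝ)) : ℂ) by push_cast; ring]
    exact Complex.norm_cpow_real _ _
  have h2 : ‖(1 - Complex.exp (-Complex.I * t)) ^ ((α/2 : ℝ) : ℂ)‖
      ≤ 2 := by
    rw [Complex.norm_cpow_real]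
    calc ‖1 - Complex.exp (-Complex.I * t)‖ ^ (α/2)
        ≤ (2 : ℝ) ^ (α/2) := Real.rpow_le_rpow (norm_nonneg _) hy2 (by linarith)
      _ ≤ (2 : ℝ) ^ (1 : ℝ) := Real.rpow_le_rpow_of_exponent_le one_le_two (by linarith)
      _ = 2 := Real.rpow_one 2
  have h3 : x ^ (α/2 + 1) ≤ 2 * x := by
    rw [Real.rpow_add' hx0 (by positivity), Real.rpow_one]
    have : x ^ (α/2) ≤ 2 := by
      calc x ^ (α/2) ≤ (2:ℝ) ^ (α/2) := Real.rpow_le_rpow hx0 hx2 (by linarith)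
        _ ≤ (2:ℝ) ^ (1:ℝ) := Real.rpow_le_rpow_of_exponent_le one_le_two (by linarith)
        _ = 2 := Real.rpow_one 2
    nlinarith [Real.rpow_nonneg hx0 (α/2)]
  calc ‖_‖ * ‖_‖ ≤ (x ^ (α/2+1)) * 2 := by
        rw [h1]; exact mul_le_mul_of_nonneg_left h2 (by positivity)
    _ ≤ (2*x) * 2 := by nlinarith [Real.rpow_nonneg hx0 (α/2+1)]
    _ = 4 * x := by ring

lemma Haux_zero {α : ℝ} (hα0 : 0 < α) (n : ℤ) : Haux α n 0 = 0 := by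
  unfold Haux
  have h1 : Complex.exp (Complex.I * ((0:ℝ):ℂ)) = 1 := by norm_num
  have h2 : Complex.exp (-Complex.I * ((0:ℝ):ℂ)) = 1 := by norm_num
  rw [h1, h2, sub_self]
  rw [Complex.zero_cpow (by
    intro h
    have := congrArg Complex.re h
    simp at this
    linarith), Complex.zero_cpow (by
    intro h
    have := congrArg Complex.re h
    simp at this
    linarith)]
  simp

lemma cont_Haux {α : ℝ} (hα0 : 0 < α) (hα2 : α < 2) (n : ℤ) :
    ContinuousOn (Haux α n) (Set.Icc (-Real.pi) Real.pi) := by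
  intro x hx
  simp only [Set.mem_Icc] at hx
  by_cases hx0 : x = 0
  · subst hx0
    apply ContinuousAt.continuousWithinAt
    rw [ContinuousAt, Haux_zero hα0 n]
    apply squeeze_zero_norm (norm_Haux_le hα0 hα2 n)
    have hcont : Continuous (fun t : ℝ => 4 * ‖1 - Complex.exp (Complex.I * t)‖) := by
      apply Continuous.mul continuous_const
      apply continuous_norm.comp
      continuity
    have := hcont.tendsto 0
    simpa using this
  · have hlt : |x| < 2 * Real.pi := by
      have hπ : 0 < Real.pi := Real.pi_pos
      rw [abs_lt]; constructor <;> linarith [hx.1, hx.2]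
    exact (hasDerivAt_Haux α n (exp_ne_one_aux hx0 hlt)).continuousAt.continuousWithinAt

lemma Haux_pi_eq {α : ℝ} (n : ℤ) : Haux α n Real.pi = Haux α n (-Real.pi) := by
  unfold Haux
  have hIpi : Complex.I * ((Real.pi : ℝ) : ℂ) = (Real.pi : ℂ) * Complex.I := by ring
  have h1 : Complex.exp (Complex.I * ((Real.pi : ℝ) : ℂ)) = -1 := by
    rw [hIpi]; exact Complex.exp_pi_mul_I
  have h2 : Complex.exp (-Complex.I * ((Real.pi : ℝ) : ℂ)) = -1 := by
    rw [show -Complex.I * ((Real.pi : ℝ) : ℂ) = -((Real.pi:ℂ) * Complex.I) by ring,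
      Complex.exp_neg, Complex.exp_pi_mul_I]
    norm_num
  have h3 : Complex.exp (Complex.I * ((-Real.pi : ℝ) : ℂ)) = -1 := by
    rw [show Complex.I * ((-Real.pi : ℝ) : ℂ) = -((Real.pi:ℂ) * Complex.I) by push_cast; ring,
      Complex.exp_neg, Complex.exp_pi_mul_I]
    norm_num
  have h4 : Complex.exp (-Complex.I * ((-Real.pi : ℝ) : ℂ)) = -1 := by
    rw [show -Complex.I * ((-Real.pi : ℝ) : ℂ) = (Real.pi:ℂ) * Complex.I by push_cast; ring]
    exact Complex.exp_pi_mul_I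
  rw [h1, h2, h3, h4]
  congr 1
  have hk : Complex.exp (Complex.I * (n:ℂ) * (Real.pi:ℂ)) *
      Complex.exp (Complex.I * (n:ℂ) * (Real.pi:ℂ)) = 1 := by
    rw [← Complex.exp_add,
      show Complex.I * (n:ℂ) * (Real.pi:ℂ) + Complex.I * (n:ℂ) * (Real.pi:ℂ)
        = (n:ℂ) * (2 * (Real.pi:ℂ) * Complex.I) by ring]
    exact Complex.exp_int_mul_two_pi_mul_I n
  have : Complex.exp (-Complex.I * (n:ℂ) * ((Real.pi : ℝ):ℂ))
      = (Complex.exp (Complex.I * (n:ℂ) * (Real.pi:ℂ)))⁻¹ := by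
    rw [← Complex.exp_neg]
    congr 1
    push_cast
    ring
  rw [this, inv_eq_of_mul_eq_one_right hk]
  congr 1
  push_cast
  ring

lemma integral_Hderiv {α : ℝ} (hα0 : 0 < α) (hα2 : α < 2) (n : ℤ) :
    ∫ η in (-Real.pi)..Real.pi, Hderiv α n η = 0 := by
  have hπ : 0 < Real.pi := Real.pi_pos
  have hint : ∀ a b : ℝ, IntervalIntegrable (Hderiv α n) volume a b :=
    fun a b => (cont_Hderiv hα0 n).intervalIntegrable a b
  have hderiv : ∀ x : ℝ, x ≠ 0 → |x| < 2 * Real.pi →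
      HasDerivWithinAt (Haux α n) (Hderiv α n x) (Set.Ioi x) x := by
    intro x h1 h2
    exact (hasDerivAt_Haux α n (exp_ne_one_aux h1 h2)).hasDerivWithinAt
  have h1 : ∫ η in (0:ℝ)..Real.pi, Hderiv α n η = Haux α n Real.pi - Haux α n 0 := by
    apply intervalIntegral.integral_eq_sub_of_hasDeriv_right_of_le hπ.le
    · exact (cont_Haux hα0 hα2 n).mono (Set.Icc_subset_Icc (by linarith) le_rfl)
    · intro x hx
      apply hderiv x (ne_of_gt hx.1)
      rw [abs_of_pos hx.1]; linarith [hx.2]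
    · exact hint 0 Real.pi
  have h2 : ∫ η in (-Real.pi)..(0:ℝ), Hderiv α n η = Haux α n 0 - Haux α n (-Real.pi) := by
    apply intervalIntegral.integral_eq_sub_of_hasDeriv_right_of_le (by linarith)
    · exact (cont_Haux hα0 hα2 n).mono (Set.Icc_subset_Icc le_rfl (by linarith))
    · intro x hx
      apply hderiv x (ne_of_lt hx.2)
      rw [abs_of_neg hx.2]; linarith [hx.1]
    · exact hint (-Real.pi) 0
  have h3 := intervalIntegral.integral_add_adjacent_intervals
    (hint (-Real.pi) 0) (hint 0 Real.pi)
  rw [← h3, h1, h2, Haux_pi_eq]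
  ring

lemma rec_IW {α : ℝ} (hα0 : 0 < α) (hα2 : α < 2) (n : ℤ) :
    ((n:ℂ) + ((α/2 : ℝ):ℂ)) * IW α n = ((n:ℂ) - 1 - ((α/2 : ℝ):ℂ)) * IW α (n-1) := by
  set c : ℂ := ((α/2 : ℝ) : ℂ) with hc
  have key : ∀ η : ℝ, Hderiv α n η =
      (-Complex.I * ((n:ℂ) + c)) * Fint α n η
      + (-Complex.I * (c + 1 - (n:ℂ))) * Fint α (n-1) η := by
    intro η
    unfold Hderiv Fint
    have he : Complex.exp (-Complex.I * ((n - 1 : ℤ):ℂ) * (η:ℂ))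
        = Complex.exp (-Complex.I * (n:ℂ) * (η:ℂ)) * Complex.exp (Complex.I * (η:ℂ)) := by
      rw [← Complex.exp_add]
      congr 1
      push_cast
      ring
    rw [he]
    ring
  have hI : ∫ η in (-Real.pi)..Real.pi, Hderiv α n η =
      (-Complex.I * ((n:ℂ) + c)) * IW α n + (-Complex.I * (c + 1 - (n:ℂ))) * IW α (n-1) := by
    unfold IW
    rw [← intervalIntegral.integral_const_mul, ← intervalIntegral.integral_const_mul,
      ← intervalIntegral.integral_add
        ((continuous_const.fun_mul (cont_Fint hα0 n)).intervalIntegrable _ _)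
        ((continuous_const.fun_mul (cont_Fint hα0 (n-1))).intervalIntegrable _ _)]
    exact intervalIntegral.integral_congr (fun η _ => key η)
  rw [integral_Hderiv hα0 hα2 n] at hI
  have hII : Complex.I * Complex.I = -1 := Complex.I_mul_I
  linear_combination (-Complex.I) * hI +
    (((n:ℂ) + c) * IW α n + (c + 1 - (n:ℂ)) * IW α (n-1)) * hII


lemma aWeightC_eq (α : ℝ) (n : ℤ) : aWeightC α n = (1 / (2 * Real.pi)) • IW α n := rfl

lemma rec_aW {α : ℝ} (hα0 : 0 < α) (hα2 : α < 2) (n : ℤ) :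
    ((n:ℂ) + ((α/2 : ℝ):ℂ)) * aWeightC α n
      = ((n:ℂ) - 1 - ((α/2 : ℝ):ℂ)) * aWeightC α (n-1) := by
  rw [aWeightC_eq, aWeightC_eq, Complex.real_smul, Complex.real_smul]
  linear_combination ((1 / (2 * Real.pi) : ℝ) : ℂ) * rec_IW hα0 hα2 n

lemma abs_rec {α : ℝ} (hα0 : 0 < α) (hα2 : α < 2) (n : ℤ) :
    |(n:ℝ) + α/2| * ‖aWeightC α n‖
      = |(n:ℝ) - 1 - α/2| * ‖aWeightC α (n-1)‖ := by
  have h := congrArg norm (rec_aW hα0 hα2 n)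
  rw [norm_mul, norm_mul] at h
  have e1 : ((n:ℂ) + ((α/2 : ℝ):ℂ)) = (((n:ℝ) + α/2 : ℝ) : ℂ) := by push_cast; ring
  have e2 : ((n:ℂ) - 1 - ((α/2 : ℝ):ℂ)) = (((n:ℝ) - 1 - α/2 : ℝ) : ℂ) := by push_cast; ring
  rw [e1, e2, Complex.norm_real, Real.norm_eq_abs, Complex.norm_real, Real.norm_eq_abs] at h
  exact h

/-- the step identity for natural indices -/
lemma abs_step {α : ℝ} (hα0 : 0 < α) (hα2 : α < 2) (k : ℕ) :
    ((k:ℝ) + 1 + α/2) * ‖aWeightC α ((k:ℤ)+1)‖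
      = |(k:ℝ) - α/2| * ‖aWeightC α (k:ℤ)‖ := by
  have h := abs_rec hα0 hα2 ((k:ℤ)+1)
  rw [show ((k:ℤ)+1) - 1 = (k:ℤ) by ring] at h
  rw [show (((k:ℤ)+1 : ℤ):ℝ) = (k:ℝ)+1 by push_cast; ring] at h
  rw [show |(k:ℝ)+1+α/2| = (k:ℝ)+1+α/2 from abs_of_pos (by positivity)] at h
  rw [show (k:ℝ)+1-1-α/2 = (k:ℝ)-α/2 by ring] at h
  exact h

lemma g_nonneg (α : ℝ) (η : ℝ) : 0 ≤ (4 * Real.sin (η/2)^2) ^ (α/2) :=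
  Real.rpow_nonneg (by positivity) _

lemma IW_zero (α : ℝ) :
    IW α 0 = ((∫ η in (-Real.pi)..Real.pi, (4 * Real.sin (η/2)^2) ^ (α/2) : ℝ) : ℂ) := by
  unfold IW Fint
  rw [← intervalIntegral.integral_ofReal]
  apply intervalIntegral.integral_congr
  intro η _
  simp

lemma A0_bounds {α : ℝ} (hα0 : 0 < α) (hα2 : α < 2) :
    1/4 ≤ ‖aWeightC α 0‖ ∧ ‖aWeightC α 0‖ ≤ 4 := by
  have hπ : 0 < Real.pi := Real.pi_pos
  set J : ℝ := ∫ η in (-Real.pi)..Real.pi, (4 * Real.sin (η/2)^2) ^ (α/2) with hJ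
  have hgint : ∀ a b : ℝ, IntervalIntegrable
      (fun η : ℝ => (4 * Real.sin (η/2)^2) ^ (α/2)) volume a b :=
    fun a b => (cont_g hα0).intervalIntegrable a b
  have hJupper : J ≤ 8 * Real.pi := by
    have hptw : ∀ η ∈ Set.Icc (-Real.pi) Real.pi, (4 * Real.sin (η/2)^2) ^ (α/2) ≤ 4 := by
      intro η _
      calc (4 * Real.sin (η/2)^2) ^ (α/2) ≤ (4:ℝ) ^ (α/2) := by
            apply Real.rpow_le_rpow (by positivity) (by nlinarith [Real.sin_sq_le_one (η/2)])
              (by linarith)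
        _ ≤ (4:ℝ) ^ (1:ℝ) := Real.rpow_le_rpow_of_exponent_le (by norm_num) (by linarith)
        _ = 4 := Real.rpow_one 4
    calc J ≤ ∫ _η in (-Real.pi)..Real.pi, (4:ℝ) := by
          apply intervalIntegral.integral_mono_on (by linarith) (hgint _ _)
            intervalIntegrable_const hptw
      _ = 8 * Real.pi := by simp; ring
  have hJlower : Real.pi / 2 ≤ J := by
    have hsplit : J = (∫ η in (-Real.pi)..(Real.pi/2), (4 * Real.sin (η/2)^2) ^ (α/2))
        + ∫ η in (Real.pi/2)..Real.pi, (4 * Real.sin (η/2)^2) ^ (α/2) := by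
      rw [intervalIntegral.integral_add_adjacent_intervals (hgint _ _) (hgint _ _)]
    have hpart1 : 0 ≤ ∫ η in (-Real.pi)..(Real.pi/2), (4 * Real.sin (η/2)^2) ^ (α/2) := by
      apply intervalIntegral.integral_nonneg (by linarith)
      intro η _
      exact g_nonneg α η
    have hpart2 : Real.pi/2 ≤ ∫ η in (Real.pi/2)..Real.pi, (4 * Real.sin (η/2)^2) ^ (α/2) := by
      have hptw : ∀ η ∈ Set.Icc (Real.pi/2) Real.pi, (1:ℝ) ≤ (4 * Real.sin (η/2)^2) ^ (α/2) := by
        intro η hη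
        have hcos : Real.cos η ≤ 0 :=
          Real.cos_nonpos_of_pi_div_two_le_of_le hη.1 (by linarith [hη.2])
        have hsin : Real.sin (η/2)^2 = 1/2 - Real.cos (2*(η/2))/2 := Real.sin_sq_eq_half_sub _
        rw [show 2*(η/2) = η by ring] at hsin
        have hbase : (1:ℝ) ≤ 4 * Real.sin (η/2)^2 := by rw [hsin]; linarith
        calc (1:ℝ) = (1:ℝ) ^ (α/2) := (Real.one_rpow _).symm
          _ ≤ (4 * Real.sin (η/2)^2) ^ (α/2) :=
              Real.rpow_le_rpow (by norm_num) hbase (by linarith)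
      calc Real.pi/2 = ∫ _η in (Real.pi/2)..Real.pi, (1:ℝ) := by simp; ring
        _ ≤ _ := by
          apply intervalIntegral.integral_mono_on (by linarith) intervalIntegrable_const
            (hgint _ _) hptw
    linarith
  have hJ0 : 0 ≤ J := le_trans (by positivity) hJlower
  have hA0 : ‖aWeightC α 0‖ = (1/(2*Real.pi)) * J := by
    rw [aWeightC_eq, Complex.real_smul, norm_mul, Complex.norm_real, Real.norm_eq_abs, IW_zero,
      Complex.norm_real, Real.norm_eq_abs, abs_of_nonneg hJ0, abs_of_nonneg (by positivity : (0:ℝ) ≤ 1/(2*Real.pi))]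
  constructor
  · rw [hA0]
    have heq : Real.pi / 2 * (1/(2*Real.pi)) = 1/4 := by field_simp; ring
    calc (1:ℝ)/4 = (Real.pi/2) * (1/(2*Real.pi)) := heq.symm
      _ ≤ J * (1/(2*Real.pi)) := mul_le_mul_of_nonneg_right hJlower (by positivity)
      _ = 1/(2*Real.pi) * J := by ring
  · rw [hA0]
    calc 1/(2*Real.pi) * J ≤ 1/(2*Real.pi) * (8*Real.pi) := by
          apply mul_le_mul_of_nonneg_left hJupper (by positivity)
      _ = 4 := by field_simp; ring


lemma bern_ub {α : ℝ} (hα0 : 0 < α) (hα2 : α < 2) {k : ℝ} (hk : 1 ≤ k) :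
    (k - α/2)/(k + 1 + α/2) ≤ ((k + α/2)/(k + 1 + α/2)) ^ (α+1) := by
  have hd : 0 < k + 1 + α/2 := by linarith
  have hb := one_add_mul_self_le_rpow_one_add
    (s := -(1/(k+1+α/2))) (by
      rw [neg_le, neg_neg]
      rw [div_le_one hd]
      linarith) (p := α+1) (by linarith)
  have e1 : 1 + (α+1) * -(1/(k+1+α/2)) = (k - α/2)/(k+1+α/2) := by
    field_simp
    ring
  have e2 : 1 + -(1/(k+1+α/2)) = (k + α/2)/(k+1+α/2) := by
    field_simp
    ring
  rw [e1, e2] at hb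
  exact hb

lemma bern_lb {α : ℝ} (hα0 : 0 < α) (hα2 : α < 2) {k : ℝ} (hk : 1 ≤ k) :
    ((k - α/2)/(k + 1 - α/2)) ^ (α+1) ≤ (k - α/2)/(k + 1 + α/2) := by
  have hks : 0 < k - α/2 := by linarith
  have hk1s : 0 < k + 1 - α/2 := by linarith
  have hd : 0 < k + 1 + α/2 := by linarith
  have hb := one_add_mul_self_le_rpow_one_add
    (s := 1/(k-α/2)) (by
      have : (0:ℝ) < 1/(k-α/2) := by positivity
      linarith) (p := α+1) (by linarith)
  have hne : k*2 - α ≠ 0 := (by linarith : (0:ℝ) < k*2 - α).ne'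
  have e1 : 1 + (α+1) * (1/(k-α/2)) = (k+1+α/2)/(k-α/2) := by
    field_simp
    ring
  have e2 : 1 + 1/(k-α/2) = (k+1-α/2)/(k-α/2) := by
    field_simp
    ring
  rw [e1, e2] at hb
  have hRpos : 0 < (k+1+α/2)/(k-α/2) := by positivity
  have hinv := inv_anti₀ hRpos hb
  rw [show (k - α/2)/(k+1-α/2) = ((k+1-α/2)/(k-α/2))⁻¹ by rw [inv_div],
    Real.inv_rpow (by positivity)]
  rw [show ((k+1+α/2)/(k-α/2))⁻¹ = (k-α/2)/(k+1+α/2) by rw [inv_div]] at hinv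
  exact hinv

lemma A1_eq {α : ℝ} (hα0 : 0 < α) (hα2 : α < 2) :
    ‖aWeightC α 1‖ = (α/2)/(1+α/2) * ‖aWeightC α 0‖ := by
  have h := abs_step hα0 hα2 0
  norm_num at h
  rw [show |α/2| = α/2 from abs_of_pos (by linarith)] at h
  have hd : (0:ℝ) < 1 + α/2 := by linarith
  field_simp
  linarith [h]

lemma A_ub {α : ℝ} (hα0 : 0 < α) (hα2 : α < 2) :
    ∀ k : ℕ, 1 ≤ k → ‖aWeightC α (k:ℤ)‖ ≤
      ‖aWeightC α 0‖ * ((1+α/2)/((k:ℝ)+α/2)) ^ (α+1) := by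
  intro k hk
  induction k, hk using Nat.le_induction with
  | base =>
    push_cast
    rw [show ((1:ℝ)+α/2)/(1+α/2) = 1 from div_self (by positivity), Real.one_rpow, mul_one]
    rw [A1_eq hα0 hα2]
    have hA0 : 0 ≤ ‖aWeightC α 0‖ := norm_nonneg _
    have : (α/2)/(1+α/2) ≤ 1 := by
      rw [div_le_one (by linarith)]
      linarith
    nlinarith
  | succ k hk IH =>
    have hk1 : (1:ℝ) ≤ (k:ℝ) := by exact_mod_cast hk
    have hstep := abs_step hα0 hα2 k
    have habs : |(k:ℝ) - α/2| = (k:ℝ) - α/2 := abs_of_pos (by linarith)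
    rw [habs] at hstep
    have hd : (0:ℝ) < (k:ℝ) + 1 + α/2 := by linarith
    have hAk1 : ‖aWeightC α ((k:ℤ)+1)‖ =
        (((k:ℝ) - α/2)/((k:ℝ)+1+α/2)) * ‖aWeightC α (k:ℤ)‖ := by
      field_simp
      linarith [hstep]
    have h1 : ‖aWeightC α ((k:ℤ)+1)‖ ≤
        (((k:ℝ)+α/2)/((k:ℝ)+1+α/2)) ^ (α+1) *
          (‖aWeightC α 0‖ * ((1+α/2)/((k:ℝ)+α/2)) ^ (α+1)) := by
      rw [hAk1]
      apply mul_le_mul (bern_ub hα0 hα2 hk1) IH (norm_nonneg _)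
        (Real.rpow_nonneg (by positivity) _)
    calc ‖aWeightC α (((k+1:ℕ)):ℤ)‖ = ‖aWeightC α ((k:ℤ)+1)‖ := by
          norm_num
      _ ≤ _ := h1
      _ = ‖aWeightC α 0‖ *
            ((((k:ℝ)+α/2)/((k:ℝ)+1+α/2)) * ((1+α/2)/((k:ℝ)+α/2))) ^ (α+1) := by
          rw [Real.mul_rpow (by positivity) (by positivity)]
          ring
      _ = ‖aWeightC α 0‖ * ((1+α/2)/(((k+1:ℕ):ℝ)+α/2)) ^ (α+1) := by
          congr 2
          push_cast
          field_simp

lemma A_lb {α : ℝ} (hα0 : 0 < α) (hα2 : α < 2) :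
    ∀ k : ℕ, 1 ≤ k → ‖aWeightC α 0‖ * ((α/2)/(1+α/2)) *
      ((1-α/2)/((k:ℝ)-α/2)) ^ (α+1) ≤ ‖aWeightC α (k:ℤ)‖ := by
  intro k hk
  have hs2 : α/2 < 1 := by linarith
  induction k, hk using Nat.le_induction with
  | base =>
    push_cast
    rw [show ((1:ℝ)-α/2)/(1-α/2) = 1 from div_self (by linarith : (0:ℝ) < 1-α/2).ne',
      Real.one_rpow, mul_one]
    rw [A1_eq hα0 hα2]
    ring_nf
    exact le_refl _
  | succ k hk IH =>
    have hk1 : (1:ℝ) ≤ (k:ℝ) := by exact_mod_cast hk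
    have hstep := abs_step hα0 hα2 k
    have habs : |(k:ℝ) - α/2| = (k:ℝ) - α/2 := abs_of_pos (by linarith)
    rw [habs] at hstep
    have hd : (0:ℝ) < (k:ℝ) + 1 + α/2 := by linarith
    have hAk1 : ‖aWeightC α ((k:ℤ)+1)‖ =
        (((k:ℝ) - α/2)/((k:ℝ)+1+α/2)) * ‖aWeightC α (k:ℤ)‖ := by
      field_simp
      linarith [hstep]
    have hb0 : (0:ℝ) ≤ ‖aWeightC α 0‖ * ((α/2)/(1+α/2)) *
        ((1-α/2)/((k:ℝ)-α/2)) ^ (α+1) := by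
      apply mul_nonneg (mul_nonneg (norm_nonneg _) (by positivity))
      exact Real.rpow_nonneg (div_nonneg (by linarith) (by linarith)) _
    have h1 : (((k:ℝ)-α/2)/((k:ℝ)+1-α/2)) ^ (α+1) *
          (‖aWeightC α 0‖ * ((α/2)/(1+α/2)) *
            ((1-α/2)/((k:ℝ)-α/2)) ^ (α+1))
        ≤ ‖aWeightC α ((k:ℤ)+1)‖ := by
      rw [hAk1]
      apply mul_le_mul (bern_lb hα0 hα2 hk1) IH hb0
        (div_nonneg (by linarith) (by linarith))
    have hbase : ((1-α/2)/(((k+1:ℕ):ℝ)-α/2))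
        = (((k:ℝ)-α/2)/((k:ℝ)+1-α/2)) * ((1-α/2)/((k:ℝ)-α/2)) := by
      push_cast
      rw [div_mul_div_comm, mul_comm (((k:ℝ)-α/2)) _, ← div_mul_div_comm,
        div_self (by linarith : (0:ℝ) < (k:ℝ)-α/2).ne', mul_one]
    calc ‖aWeightC α 0‖ * ((α/2)/(1+α/2)) *
            ((1-α/2)/(((k+1:ℕ):ℝ)-α/2)) ^ (α+1)
        = (((k:ℝ)-α/2)/((k:ℝ)+1-α/2)) ^ (α+1) *
            (‖aWeightC α 0‖ * ((α/2)/(1+α/2)) *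
              ((1-α/2)/((k:ℝ)-α/2)) ^ (α+1)) := by
          rw [hbase, Real.mul_rpow (div_nonneg (by linarith) (by linarith))
            (div_nonneg (by linarith) (by linarith))]
          ring
      _ ≤ ‖aWeightC α ((k:ℤ)+1)‖ := h1
      _ = ‖aWeightC α (((k+1:ℕ)):ℤ)‖ := by norm_num


lemma A_neg {α : ℝ} (hα0 : 0 < α) (hα2 : α < 2) :
    ∀ k : ℕ, ‖aWeightC α (-(k:ℤ))‖ = ‖aWeightC α (k:ℤ)‖ := by
  intro k
  induction k with
  | zero => norm_num
  | succ k IH =>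
    have h := abs_rec hα0 hα2 (-(k:ℤ))
    have e1 : |((-(k:ℤ) : ℤ):ℝ) + α/2| = |(k:ℝ) - α/2| := by
      push_cast
      rw [show -(k:ℝ) + α/2 = -((k:ℝ) - α/2) by ring, abs_neg]
    have e2 : |((-(k:ℤ) : ℤ):ℝ) - 1 - α/2| = (k:ℝ) + 1 + α/2 := by
      push_cast
      rw [show -(k:ℝ) - 1 - α/2 = -((k:ℝ) + 1 + α/2) by ring, abs_neg]
      exact abs_of_pos (by positivity)
    rw [e1, e2, IH] at h
    have hstep := abs_step hα0 hα2 k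
    have e3 : (-(k:ℤ) - 1) = -(((k+1:ℕ)):ℤ) := by push_cast; ring
    rw [e3] at h
    have e4 : ((k:ℤ)+1) = (((k+1:ℕ)):ℤ) := by push_cast; ring
    rw [e4] at hstep
    have hd : (0:ℝ) < (k:ℝ) + 1 + α/2 := by positivity
    have : ((k:ℝ) + 1 + α/2) * ‖aWeightC α (-(((k+1:ℕ)):ℤ))‖
        = ((k:ℝ) + 1 + α/2) * ‖aWeightC α ((((k+1:ℕ)):ℤ))‖ := by
      rw [hstep]
      linarith [h]
    exact mul_left_cancel₀ hd.ne' this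

/-- antitone of rpow in the base for nonpositive exponents -/
lemma rpow_base_anti {a b q : ℝ} (ha : 0 < a) (hab : a ≤ b) (hq : q ≤ 0) :
    b ^ q ≤ a ^ q := by
  have hb : 0 < b := lt_of_lt_of_le ha hab
  have h1 : a ^ (-q) ≤ b ^ (-q) := Real.rpow_le_rpow ha.le hab (by linarith)
  have h2 := inv_anti₀ (Real.rpow_pos_of_pos ha (-q)) h1
  rw [show q = -(-q) by ring, Real.rpow_neg ha.le, Real.rpow_neg hb.le]
  exact h2

lemma A_ub_final {α : ℝ} (hα0 : 0 < α) (hα2 : α < 2) (k : ℕ) (hk : 1 ≤ k) :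
    ‖aWeightC α (k:ℤ)‖ ≤ 32 * (k:ℝ) ^ (-α-1) := by
  have hk1 : (1:ℝ) ≤ (k:ℝ) := by exact_mod_cast hk
  have h1 := A_ub hα0 hα2 k hk
  have hA0 := (A0_bounds hα0 hα2).2
  have hbase : ((1:ℝ)+α/2)/((k:ℝ)+α/2) ≤ 2/(k:ℝ) := by
    rw [div_le_div_iff₀ (by positivity) (by linarith)]
    nlinarith
  have h2 : ((1+α/2)/((k:ℝ)+α/2)) ^ (α+1) ≤ (2/(k:ℝ)) ^ (α+1) :=
    Real.rpow_le_rpow (by positivity) hbase (by linarith)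
  have h3 : (2/(k:ℝ)) ^ (α+1) = (2:ℝ)^(α+1) * (k:ℝ) ^ (-α-1) := by
    rw [Real.div_rpow (by norm_num) (by linarith), div_eq_mul_inv,
      show -α-1 = -(α+1) by ring, Real.rpow_neg (by linarith)]
  have h4 : (2:ℝ)^(α+1) ≤ 8 := by
    calc (2:ℝ)^(α+1) ≤ (2:ℝ)^((3:ℕ):ℝ) :=
          Real.rpow_le_rpow_of_exponent_le one_le_two (by push_cast; linarith)
      _ = 8 := by rw [Real.rpow_natCast]; norm_num
  have hkpow : (0:ℝ) ≤ (k:ℝ) ^ (-α-1) := Real.rpow_nonneg (by linarith) _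
  calc ‖aWeightC α (k:ℤ)‖ ≤
      ‖aWeightC α 0‖ * ((1+α/2)/((k:ℝ)+α/2)) ^ (α+1) := h1
    _ ≤ 4 * ((2:ℝ)^(α+1) * (k:ℝ) ^ (-α-1)) := by
        rw [← h3]
        apply mul_le_mul hA0 h2 (Real.rpow_nonneg (by positivity) _) (by norm_num)
    _ ≤ 4 * (8 * (k:ℝ) ^ (-α-1)) := by nlinarith
    _ = 32 * (k:ℝ) ^ (-α-1) := by ring

lemma A_lb_final {αmin αmax α : ℝ} (h1 : 0 < αmin) (h3 : αmax < 2)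
    (hm : αmin ≤ α) (hM : α ≤ αmax) (k : ℕ) (hk : 1 ≤ k) :
    (αmin/16) * ((2-αmax)/2)^3 * (k:ℝ) ^ (-α-1) ≤ ‖aWeightC α (k:ℤ)‖ := by
  have hα0 : 0 < α := lt_of_lt_of_le h1 hm
  have hα2 : α < 2 := lt_of_le_of_lt hM h3
  have hk1 : (1:ℝ) ≤ (k:ℝ) := by exact_mod_cast hk
  have hs1 : α/2 < 1 := by linarith
  have hlb := A_lb hα0 hα2 k hk
  have hA0 := (A0_bounds hα0 hα2).1
  -- s/(1+s) ≥ αmin/4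
  have hfrac : αmin/4 ≤ (α/2)/(1+α/2) := by
    rw [div_le_div_iff₀ (by norm_num) (by linarith)]
    nlinarith
  -- base ineq
  have hbase : (1-α/2)/(k:ℝ) ≤ (1-α/2)/((k:ℝ)-α/2) :=
    div_le_div_of_nonneg_left (by linarith) (by linarith) (by linarith)
  have h2 : ((1-α/2)/(k:ℝ)) ^ (α+1) ≤ ((1-α/2)/((k:ℝ)-α/2)) ^ (α+1) :=
    Real.rpow_le_rpow (div_nonneg (by linarith) (by linarith)) hbase (by linarith)
  have h3' : ((1-α/2)/(k:ℝ)) ^ (α+1) = (1-α/2)^(α+1) * (k:ℝ) ^ (-α-1) := by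
    rw [Real.div_rpow (by linarith) (by linarith), div_eq_mul_inv,
      show -α-1 = -(α+1) by ring, Real.rpow_neg (by linarith)]
  have h4 : ((2-αmax)/2)^3 ≤ (1-α/2)^(α+1) := by
    calc ((2-αmax)/2)^3 ≤ (1-α/2)^(3:ℕ) := by
          apply pow_le_pow_left₀ (by linarith) (by linarith)
      _ = (1-α/2)^((3:ℕ):ℝ) := (Real.rpow_natCast _ 3).symm
      _ ≤ (1-α/2)^(α+1) :=
          Real.rpow_le_rpow_of_exponent_ge (by linarith) (by linarith) (by push_cast; linarith)
  have hkpow : (0:ℝ) ≤ (k:ℝ) ^ (-α-1) := Real.rpow_nonneg (by linarith) _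
  calc (αmin/16) * ((2-αmax)/2)^3 * (k:ℝ) ^ (-α-1)
      = (1/4) * (αmin/4) * (((2-αmax)/2)^3 * (k:ℝ) ^ (-α-1)) := by ring
    _ ≤ ‖aWeightC α 0‖ * ((α/2)/(1+α/2)) *
          ((1-α/2)^(α+1) * (k:ℝ) ^ (-α-1)) := by
        apply mul_le_mul
        · apply mul_le_mul hA0 hfrac (by linarith) (norm_nonneg _)
        · exact mul_le_mul_of_nonneg_right h4 hkpow
        · exact mul_nonneg (pow_nonneg (by linarith) 3) hkpow
        · apply mul_nonneg (norm_nonneg _) (by positivity)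
    _ = ‖aWeightC α 0‖ * ((α/2)/(1+α/2)) * ((1-α/2)/(k:ℝ)) ^ (α+1) := by
        rw [h3']
    _ ≤ ‖aWeightC α 0‖ * ((α/2)/(1+α/2)) * ((1-α/2)/((k:ℝ)-α/2)) ^ (α+1) := by
        apply mul_le_mul_of_nonneg_left h2
        apply mul_nonneg (norm_nonneg _) (by positivity)
    _ ≤ ‖aWeightC α (k:ℤ)‖ := hlb


/-- Two-sided decay estimates `c₁|n|^{-α-1} ≤ |a_n^{(α)}| ≤ c₂|n|^{-α-1}` and the tail
lower bound `Σ_{n ≥ N} |a_n^{(α)}| ≥ c₃ N^{-α}`, uniformly for `α ∈ [α_min, α_max]`. -/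
theorem stmt12 (αmin αmax : ℝ) (h1 : 0 < αmin) (h2 : αmin ≤ αmax) (h3 : αmax < 2) :
    ∃ c1 c2 c3 : ℝ, 0 < c1 ∧ 0 < c2 ∧ 0 < c3 ∧
      ∀ α : ℝ, αmin ≤ α → α ≤ αmax →
        (∀ n : ℤ, n ≠ 0 →
          c1 * |(n : ℝ)| ^ (-α - 1) ≤ ‖aWeightC α n‖ ∧
          ‖aWeightC α n‖ ≤ c2 * |(n : ℝ)| ^ (-α - 1)) ∧
        (∀ N : ℕ, 1 ≤ N →
          c3 * (N : ℝ) ^ (-α) ≤ ∑' k : ℕ, ‖aWeightC α ((N : ℤ) + k)‖) := by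
  have h2m : (0:ℝ) < 2 - αmax := by linarith
  refine ⟨αmin/16 * ((2-αmax)/2)^3, 32, (αmin/16 * ((2-αmax)/2)^3)/8,
    by positivity, by norm_num, by positivity, ?_⟩
  intro α hm hM
  have hα0 : 0 < α := lt_of_lt_of_le h1 hm
  have hα2 : α < 2 := lt_of_le_of_lt hM h3
  set c1 : ℝ := αmin/16 * ((2-αmax)/2)^3 with hc1
  have hc1pos : 0 < c1 := by positivity
  constructor
  · -- part (i)
    intro n hn
    set k := n.natAbs with hkdef
    have hk1 : 1 ≤ k := Int.natAbs_pos.mpr hn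
    have habs : |(n:ℝ)| = (k:ℝ) := by
      rw [hkdef, Nat.cast_natAbs]
      exact Int.cast_abs.symm
    have hAeq : ‖aWeightC α n‖ = ‖aWeightC α (k:ℤ)‖ := by
      rcases Int.natAbs_eq n with h | h
      · rw [← hkdef] at h; rw [h]
      · rw [← hkdef] at h
        rw [h]
        exact A_neg hα0 hα2 k
    rw [habs, hAeq]
    exact ⟨A_lb_final h1 h3 hm hM k hk1, A_ub_final hα0 hα2 k hk1⟩
  · -- part (ii)
    intro N hN
    have hN1 : (1:ℝ) ≤ (N:ℝ) := by exact_mod_cast hN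
    set f : ℕ → ℝ := fun k => ‖aWeightC α ((N:ℤ)+k)‖ with hf
    have hidx : ∀ k : ℕ, ((N:ℤ)+k) = (((N+k : ℕ)):ℤ) := by intro k; push_cast; ring
    have hNk1 : ∀ k : ℕ, 1 ≤ N + k := fun k => le_trans hN (Nat.le_add_right N k)
    have hub : ∀ k : ℕ, f k ≤ 32 * ((k:ℝ)+1)^(-α-1) := by
      intro k
      have e1 : f k = ‖aWeightC α (((N+k:ℕ)):ℤ)‖ := by rw [hf]; simp only; rw [hidx]
      rw [e1]
      calc ‖aWeightC α (((N+k:ℕ)):ℤ)‖ ≤ 32 * (((N+k:ℕ)):ℝ)^(-α-1) :=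
            A_ub_final hα0 hα2 (N+k) (hNk1 k)
        _ ≤ 32 * ((k:ℝ)+1)^(-α-1) := by
            apply mul_le_mul_of_nonneg_left _ (by norm_num)
            apply rpow_base_anti (by positivity) (by push_cast; linarith) (by linarith)
    have hsum32 : Summable (fun k : ℕ => 32 * ((k:ℝ)+1)^(-α-1)) := by
      have hs : Summable (fun k : ℕ => ((k:ℝ))^(-α-1)) :=
        Real.summable_nat_rpow.mpr (by linarith)
      have hs2 := (summable_nat_add_iff 1).mpr hs
      have hs3 : Summable (fun k : ℕ => ((k:ℝ)+1)^(-α-1)) := by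
        apply hs2.congr
        intro k
        push_cast
        ring_nf
      exact hs3.mul_left 32
    have hfsummable : Summable f :=
      Summable.of_nonneg_of_le (fun k => norm_nonneg _) hub hsum32
    have hlow : ∀ k ∈ Finset.range N, c1 * ((2*(N:ℝ)))^(-α-1) ≤ f k := by
      intro k hk
      have hkN : k < N := Finset.mem_range.mp hk
      have e1 : f k = ‖aWeightC α (((N+k:ℕ)):ℤ)‖ := by rw [hf]; simp only; rw [hidx]
      rw [e1]
      calc c1 * ((2*(N:ℝ)))^(-α-1) ≤ c1 * (((N+k:ℕ)):ℝ)^(-α-1) := by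
            apply mul_le_mul_of_nonneg_left _ hc1pos.le
            have hkr : (k:ℝ) < (N:ℝ) := by exact_mod_cast hkN
            apply rpow_base_anti (by push_cast; linarith) (by push_cast; linarith)
              (by linarith)
        _ ≤ ‖aWeightC α (((N+k:ℕ)):ℤ)‖ :=
            A_lb_final h1 h3 hm hM (N+k) (hNk1 k)
    have hpartial : (N:ℝ) * (c1 * ((2*(N:ℝ)))^(-α-1)) ≤ ∑' k, f k := by
      calc (N:ℝ) * (c1 * ((2*(N:ℝ)))^(-α-1))
          = ∑ _k ∈ Finset.range N, c1 * ((2*(N:ℝ)))^(-α-1) := by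
            rw [Finset.sum_const, Finset.card_range, nsmul_eq_mul]
        _ ≤ ∑ k ∈ Finset.range N, f k := Finset.sum_le_sum hlow
        _ ≤ ∑' k, f k := Summable.sum_le_tsum _ (fun k _ => norm_nonneg _) hfsummable
    -- algebra
    have hsplit : ((2*(N:ℝ)))^(-α-1) = (2:ℝ)^(-α-1) * (N:ℝ)^(-α-1) :=
      Real.mul_rpow (by norm_num) (by linarith)
    have h18 : (1:ℝ)/8 ≤ (2:ℝ)^(-α-1) := by
      calc (1:ℝ)/8 = (2:ℝ)^(-((3:ℕ):ℝ)) := by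
            rw [Real.rpow_neg (by norm_num), Real.rpow_natCast]
            norm_num
        _ ≤ (2:ℝ)^(-α-1) :=
            Real.rpow_le_rpow_of_exponent_le one_le_two (by push_cast; linarith)
    have hNpow : (N:ℝ) * (N:ℝ)^(-α-1) = (N:ℝ)^(-α) := by
      nth_rewrite 1 [← Real.rpow_one (N:ℝ)]
      rw [← Real.rpow_add (by linarith)]
      norm_num
    have hNpow_nonneg : (0:ℝ) ≤ (N:ℝ)^(-α-1) := Real.rpow_nonneg (by linarith) _
    calc c1/8 * (N:ℝ)^(-α) = c1 * (1/8) * ((N:ℝ) * (N:ℝ)^(-α-1)) := by rw [hNpow]; ring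
      _ ≤ c1 * (2:ℝ)^(-α-1) * ((N:ℝ) * (N:ℝ)^(-α-1)) := by
          apply mul_le_mul_of_nonneg_right _ (by positivity)
          exact mul_le_mul_of_nonneg_left h18 hc1pos.le
      _ = (N:ℝ) * (c1 * ((2*(N:ℝ)))^(-α-1)) := by rw [hsplit]; ring
      _ ≤ ∑' k, f k := hpartial
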